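/- arXiv:2110.00040 — 2 statements merged into one kernel-verified Lean document; each statement's English description precedes it below -/
import Mathlib

section
/- Let g : ℝ⁺ → ℝ⁺ satisfy g(n+1)/g(n) → 1 as the positive integer n → ∞. If f : ℝ⁺ → ℝ⁺ satisfies f(x+1) = g(x) f(x), f(1) = 1, and f is eventually log-convex of order two, then for each x > 0, f(x) ≤ liminf_{n→∞} [g(n)⋯g(1) g(n)^x] / [g(n+x)⋯g(x)]. -/
open Filter Finset Real

/-- Divided difference of `h` at the points `x 0, …, x (m-1)` (assumed pairwise distinct),
via the Lagrange formula. -/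
noncomputable def divDiff (h : ℝ → ℝ) {m : ℕ} (x : Fin m → ℝ) : ℝ :=
  ∑ i, h (x i) / ∏ j ∈ Finset.univ.erase i, (x i - x j)

/-- `h` is convex of order `n` on `I` : all divided differences at `n+2` increasing
points of `I` are nonnegative. -/
def NConvexOn (n : ℕ) (I : Set ℝ) (h : ℝ → ℝ) : Prop :=
  ∀ x : Fin (n + 2) → ℝ, StrictMono x → (∀ i, x i ∈ I) → 0 ≤ divDiff h x

/-- `h` is concave of order `n` on `I` if `-h` is convex of order `n` on `I`. -/
def NConcaveOn (n : ℕ) (I : Set ℝ) (h : ℝ → ℝ) : Prop :=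
  NConvexOn n I (fun t => -h t)

noncomputable def gammaTypeSeq (g : ℝ → ℝ) (x : ℝ) (n : ℕ) : ℝ :=
  ((∏ k ∈ Finset.Icc 1 n, g k) * g n ^ x) / ∏ k ∈ Finset.range (n + 1), g (x + k)

lemma divDiff_four (h : ℝ → ℝ) (a b c d : ℝ) :
    divDiff h ![a,b,c,d] = h a / ((a-b)*((a-c)*(a-d))) + h b / ((b-a)*((b-c)*(b-d)))
      + h c / ((c-a)*((c-b)*(c-d))) + h d / ((d-a)*((d-b)*(d-c))) := by
  have e0 : (Finset.univ.erase (0 : Fin 4)) = {1, 2, 3} := by decide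
  have e1 : (Finset.univ.erase (1 : Fin 4)) = {0, 2, 3} := by decide
  have e2 : (Finset.univ.erase (2 : Fin 4)) = {0, 1, 3} := by decide
  have e3 : (Finset.univ.erase (3 : Fin 4)) = {0, 1, 2} := by decide
  simp [divDiff, Fin.sum_univ_four, e0, e1, e2, e3, Finset.prod_insert, Finset.prod_singleton]

lemma strictMono_vec4 {a b c d : ℝ} (h1 : a < b) (h2 : b < c) (h3 : c < d) :
    StrictMono ![a,b,c,d] := by
  intro i j hij
  fin_cases i <;> fin_cases j <;> simp_all <;> linarith

lemma quad_upper (H : ℝ → ℝ) (p y : ℝ) (hy0 : 0 < y) (hy1 : y < 1)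
    (h4 : 0 ≤ divDiff H ![p, p+1, p+1+y, p+2]) :
    H (p+1+y) ≤ (-(y*(1-y)/2)) * H p + ((1-y)*(1+y)) * H (p+1) + (y*(1+y)/2) * H (p+2) := by
  rw [divDiff_four] at h4
  have d0 : (p-(p+1))*((p-(p+1+y))*(p-(p+2))) = -(2*(1+y)) := by ring
  have d1 : ((p+1)-p)*(((p+1)-(p+1+y))*((p+1)-(p+2))) = y := by ring
  have d2 : ((p+1+y)-p)*(((p+1+y)-(p+1))*((p+1+y)-(p+2))) = -((1+y)*(y*(1-y))) := by ring
  have d3 : ((p+2)-p)*(((p+2)-(p+1))*((p+2)-(p+1+y))) = 2*(1-y) := by ring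
  rw [d0, d1, d2, d3] at h4
  have hy1' : (0:ℝ) < 1 - y := by linarith
  have hpos : (0:ℝ) < 2*y*(1-y)*(1+y) := by positivity
  have h7 := mul_nonneg hpos.le h4
  have h6 : (2*y*(1-y)*(1+y)) * (H p / (-(2*(1+y))) + H (p+1) / y
      + H (p+1+y) / (-((1+y)*(y*(1-y)))) + H (p+2) / (2*(1-y)))
      = -(y*(1-y)) * H p + (2*(1-y)*(1+y)) * H (p+1) - 2 * H (p+1+y)
        + (y*(1+y)) * H (p+2) := by
    field_simp
    ring
  rw [h6] at h7
  linarith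

lemma quad_lower (H : ℝ → ℝ) (p y : ℝ) (hy0 : 0 < y)
    (h4 : 0 ≤ divDiff H ![p, p+1, p+2, p+2+y]) :
    (y*(1+y)/2) * H p - (y*(2+y)) * H (p+1) + ((1+y)*(2+y)/2) * H (p+2) ≤ H (p+2+y) := by
  rw [divDiff_four] at h4
  have d0 : (p-(p+1))*((p-(p+2))*(p-(p+2+y))) = -(2*(2+y)) := by ring
  have d1 : ((p+1)-p)*(((p+1)-(p+2))*((p+1)-(p+2+y))) = 1+y := by ring
  have d2 : ((p+2)-p)*(((p+2)-(p+1))*((p+2)-(p+2+y))) = -(2*y) := by ring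
  have d3 : ((p+2+y)-p)*(((p+2+y)-(p+1))*((p+2+y)-(p+2))) = (2+y)*((1+y)*y) := by ring
  rw [d0, d1, d2, d3] at h4
  have hpos : (0:ℝ) < 2*y*(1+y)*(2+y) := by positivity
  have h7 := mul_nonneg hpos.le h4
  have h6 : (2*y*(1+y)*(2+y)) * (H p / (-(2*(2+y))) + H (p+1) / (1+y)
      + H (p+2) / (-(2*y)) + H (p+2+y) / ((2+y)*((1+y)*y)))
      = -(y*(1+y)) * H p + (2*y*(2+y)) * H (p+1) - ((1+y)*(2+y)) * H (p+2)
        + 2 * H (p+2+y) := by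
    field_simp
    ring
  rw [h6] at h7
  linarith

theorem le_liminf_of_second_order_logConvex (g f : ℝ → ℝ)
    (hg : ∀ x > 0, 0 < g x) (hf : ∀ x > 0, 0 < f x)
    (hseq : Tendsto (fun n : ℕ => g ((n : ℝ) + 1) / g n) atTop (nhds 1))
    (hconv2 : ∃ M : ℝ, NConvexOn 2 (Set.Ioi M) (fun x => Real.log (f x)))
    (hfe : ∀ x > 0, f (x + 1) = g x * f x)
    (hf1 : f 1 = 1) :
    ∀ x > 0, f x ≤ Filter.liminf (fun n : ℕ => gammaTypeSeq g x n) atTop := by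
  intro x hx
  obtain ⟨M, hM⟩ := hconv2
  set e : ℕ → ℝ := fun n => Real.log (g ((n:ℝ) + 1)) - Real.log (g (n:ℝ)) with he_def
  -- e tends to 0
  have he : Tendsto e atTop (nhds 0) := by
    have h1 : Tendsto (fun n : ℕ => Real.log (g ((n:ℝ)+1) / g (n:ℝ))) atTop (nhds 0) := by
      have := (Real.continuousAt_log (by norm_num : (1:ℝ) ≠ 0)).tendsto.comp hseq
      simpa [Function.comp_def] using this
    apply h1.congr'
    filter_upwards [eventually_ge_atTop 1] with n hn
    have hn0 : (0:ℝ) < (n:ℝ) := by exact_mod_cast hn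
    rw [Real.log_div (hg _ (by linarith)).ne' (hg _ hn0).ne']
  -- step identity for log f at positive points
  have hlog : ∀ t : ℝ, 0 < t → Real.log (f (t+1)) = Real.log (g t) + Real.log (f t) := by
    intro t ht
    rw [hfe t ht, Real.log_mul (hg t ht).ne' (hf t ht).ne']
  -- D
  set D : ℝ → ℕ → ℝ := fun y n =>
    Real.log (f (y + (n:ℝ) + 1)) - Real.log (f ((n:ℝ) + 1)) - y * Real.log (g (n:ℝ)) with hD
  -- recurrence
  have hrec : ∀ y : ℝ, ∀ n : ℕ, D (y+1) n = D y (n+1) + (y+1) * e n := by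
    intro y n
    simp only [hD, he_def]
    push_cast
    have hstep : Real.log (f ((n:ℝ)+1+1)) = Real.log (g ((n:ℝ)+1)) + Real.log (f ((n:ℝ)+1)) :=
      hlog _ (by positivity)
    rw [show y+1+(n:ℝ)+1 = y+((n:ℝ)+1)+1 from by ring, hstep]
    ring
  -- base case
  have hD0 : ∀ y : ℝ, 0 < y → y ≤ 1 → Tendsto (fun n => D y n) atTop (nhds 0) := by
    intro y hy0 hy1
    rcases eq_or_lt_of_le hy1 with rfl | hy1'
    · apply he.congr
      intro n
      simp only [hD, he_def]
      have hstep : Real.log (f ((n:ℝ)+1+1)) = Real.log (g ((n:ℝ)+1)) + Real.log (f ((n:ℝ)+1)) :=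
        hlog _ (by positivity)
      rw [show (1:ℝ)+(n:ℝ)+1 = (n:ℝ)+1+1 from by ring, hstep]
      ring
    · -- squeeze for the shifted sequence
      have hub : ∀ n : ℕ, M < (n:ℝ) → 1 ≤ n → D y n ≤ y*(1+y)/2 * e n := by
        intro n hMn h1n
        have hn0 : (0:ℝ) < (n:ℝ) := by exact_mod_cast h1n
        have hmono : StrictMono ![(n:ℝ), (n:ℝ)+1, (n:ℝ)+1+y, (n:ℝ)+2] :=
          strictMono_vec4 (by linarith) (by linarith) (by linarith)
        have hmem : ∀ i, ![(n:ℝ), (n:ℝ)+1, (n:ℝ)+1+y, (n:ℝ)+2] i ∈ Set.Ioi M := by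
          intro i; fin_cases i <;> simp [Set.mem_Ioi] <;> linarith
        have key := quad_upper (fun t => Real.log (f t)) (n:ℝ) y hy0 hy1'
          (hM _ hmono hmem)
        have hA : Real.log (f (n:ℝ)) = Real.log (f ((n:ℝ)+1)) - Real.log (g (n:ℝ)) := by
          rw [hlog _ hn0]; ring
        have hDd : Real.log (f ((n:ℝ)+2)) = Real.log (g ((n:ℝ)+1)) + Real.log (f ((n:ℝ)+1)) := by
          have := hlog ((n:ℝ)+1) (by positivity)
          rw [show (n:ℝ)+1+1 = (n:ℝ)+2 from by ring] at this
          exact this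
        rw [hA, hDd] at key
        simp only [hD, he_def]
        rw [show y+(n:ℝ)+1 = (n:ℝ)+1+y from by ring]
        nlinarith [key]
      have hlb : ∀ n : ℕ, M < (n:ℝ) → 1 ≤ n → y*(1+y)/2 * e n ≤ D y (n+1) := by
        intro n hMn h1n
        have hn0 : (0:ℝ) < (n:ℝ) := by exact_mod_cast h1n
        have hmono : StrictMono ![(n:ℝ), (n:ℝ)+1, (n:ℝ)+2, (n:ℝ)+2+y] :=
          strictMono_vec4 (by linarith) (by linarith) (by linarith)
        have hmem : ∀ i, ![(n:ℝ), (n:ℝ)+1, (n:ℝ)+2, (n:ℝ)+2+y] i ∈ Set.Ioi M := by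
          intro i; fin_cases i <;> simp [Set.mem_Ioi] <;> linarith
        have key := quad_lower (fun t => Real.log (f t)) (n:ℝ) y hy0 (hM _ hmono hmem)
        have hA : Real.log (f (n:ℝ)) = Real.log (f ((n:ℝ)+1)) - Real.log (g (n:ℝ)) := by
          rw [hlog _ hn0]; ring
        have hDd : Real.log (f ((n:ℝ)+2)) = Real.log (g ((n:ℝ)+1)) + Real.log (f ((n:ℝ)+1)) := by
          have := hlog ((n:ℝ)+1) (by positivity)
          rw [show (n:ℝ)+1+1 = (n:ℝ)+2 from by ring] at this
          exact this
        rw [hA, hDd] at key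
        simp only [hD, he_def]
        push_cast
        rw [show y+((n:ℝ)+1)+1 = (n:ℝ)+2+y from by ring,
          show (n:ℝ)+1+1 = (n:ℝ)+2 from by ring, hDd]
        nlinarith [key]
      have hsq : Tendsto (fun n : ℕ => D y (n+1)) atTop (nhds 0) := by
        have hlo : Tendsto (fun n : ℕ => y*(1+y)/2 * e n) atTop (nhds 0) := by
          simpa using he.const_mul (y*(1+y)/2)
        have hhi : Tendsto (fun n : ℕ => y*(1+y)/2 * e (n+1)) atTop (nhds 0) := by
          have := (he.comp (tendsto_add_atTop_nat 1)).const_mul (y*(1+y)/2)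
          simpa [Function.comp] using this
        apply tendsto_of_tendsto_of_tendsto_of_le_of_le' hlo hhi
        · filter_upwards [(tendsto_natCast_atTop_atTop (R := ℝ)).eventually_gt_atTop M,
            eventually_ge_atTop 1] with n h1 h2
          exact hlb n h1 h2
        · filter_upwards [(tendsto_natCast_atTop_atTop (R := ℝ)).eventually_gt_atTop (M-1),
            eventually_ge_atTop 1] with n h1 h2
          exact hub (n+1) (by push_cast; linarith) (by omega)
      exact (tendsto_add_atTop_iff_nat 1).mp hsq
  -- all y
  have hall : ∀ k : ℕ, ∀ y : ℝ, 0 < y → y ≤ (k:ℝ) + 1 → Tendsto (fun n => D y n) atTop (nhds 0) := by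
    intro k
    induction k with
    | zero => intro y h0 h1; exact hD0 y h0 (by simpa using h1)
    | succ k ih =>
      intro y h0 h1
      by_cases hc : y ≤ (k:ℝ) + 1
      · exact ih y h0 hc
      · push_neg at hc
        have hk0 : (0:ℝ) ≤ (k:ℝ) := Nat.cast_nonneg k
        have h3 := ih (y-1) (by linarith) (by push_cast at h1 ⊢; linarith)
        have h4 : Tendsto (fun n : ℕ => D (y-1) (n+1) + y * e n) atTop (nhds 0) := by
          have := (h3.comp (tendsto_add_atTop_nat 1)).add (he.const_mul y)
          simpa [Function.comp] using this
        apply h4.congr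
        intro n
        have h5 := hrec (y-1) n
        rw [show y - 1 + 1 = y from by ring] at h5
        exact h5.symm
  have hDx : Tendsto (fun n => D x n) atTop (nhds 0) :=
    hall ⌈x⌉₊ x hx (by have := Nat.le_ceil x; push_cast at this ⊢; linarith)
  -- product formulas
  have hB : ∀ n : ℕ, f ((n:ℝ)+1) = ∏ k ∈ Finset.Icc 1 n, g (k:ℝ) := by
    intro n
    induction n with
    | zero => simpa using hf1
    | succ n ihn =>
      rw [Finset.prod_Icc_succ_top (by omega : 1 ≤ n+1), ← ihn]
      have := hfe ((n:ℝ)+1) (by positivity)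
      push_cast
      rw [this]
      ring
  have hC : ∀ n : ℕ, f (x + (n:ℝ) + 1) = f x * ∏ k ∈ Finset.range (n+1), g (x + (k:ℝ)) := by
    intro n
    induction n with
    | zero =>
      rw [show x + ((0:ℕ):ℝ) + 1 = x + 1 from by norm_num, hfe x hx]
      simp [mul_comm]
    | succ n ihn =>
      rw [Finset.prod_range_succ, ← mul_assoc, ← ihn]
      have := hfe (x + (n:ℝ) + 1) (by positivity)
      push_cast
      rw [show x + ((n:ℝ)+1) + 1 = (x + (n:ℝ) + 1) + 1 from by ring, this]
      ring
  -- gammaTypeSeq identity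
  have hgamma : ∀ n : ℕ, 1 ≤ n → gammaTypeSeq g x n = f x * Real.exp (-(D x n)) := by
    intro n hn
    have hn0 : (0:ℝ) < (n:ℝ) := by exact_mod_cast hn
    have hfn1 : 0 < f ((n:ℝ)+1) := hf _ (by linarith)
    have hfxn : 0 < f (x + (n:ℝ) + 1) := hf _ (by linarith)
    have hgn : 0 < g (n:ℝ) := hg _ hn0
    have hfx : 0 < f x := hf x hx
    have hexp : Real.exp (-(D x n)) = f ((n:ℝ)+1) * g (n:ℝ) ^ x / f (x + (n:ℝ) + 1) := by
      simp only [hD]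
      rw [show -(Real.log (f (x + (n:ℝ) + 1)) - Real.log (f ((n:ℝ)+1)) - x * Real.log (g (n:ℝ)))
        = (Real.log (f ((n:ℝ)+1)) + x * Real.log (g (n:ℝ))) - Real.log (f (x + (n:ℝ) + 1))
        from by ring]
      rw [Real.exp_sub, Real.exp_add, Real.exp_log hfn1, Real.exp_log hfxn,
        mul_comm x (Real.log (g (n:ℝ))), ← Real.rpow_def_of_pos hgn]
    unfold gammaTypeSeq
    rw [← hB n, hexp]
    have hprod : ∏ k ∈ Finset.range (n+1), g (x + (k:ℝ)) = f (x + (n:ℝ) + 1) / f x := by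
      rw [hC n]; field_simp
    rw [hprod]
    field_simp
  -- conclude
  have hfx : 0 < f x := hf x hx
  have hlim : Tendsto (fun n : ℕ => gammaTypeSeq g x n) atTop (nhds (f x)) := by
    have h1 : Tendsto (fun n : ℕ => f x * Real.exp (-(D x n))) atTop (nhds (f x * Real.exp (-0))) := by
      exact tendsto_const_nhds.mul ((Real.continuous_exp.tendsto _).comp hDx.neg)
    simp only [neg_zero, Real.exp_zero, mul_one] at h1
    apply h1.congr'
    filter_upwards [eventually_ge_atTop 1] with n hn
    exact (hgamma n hn).symm
  rw [hlim.liminf_eq]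
end

section
/- The gamma function Γ is the unique function f : (0,∞) → (0,∞) satisfying: (a) f(x+1) = x f(x) for all x > 0; (b) f(1) = 1; (c) f is log-concave of order two, i.e., log f is 2-concave on (0,∞) (all third divided differences of log f are ≤ 0). -/
open Filter Finset Real

noncomputable def DD4 (a b c d ha hb hc hd : ℝ) : ℝ :=
    ha / ((a-b)*((a-c)*(a-d))) + hb / ((b-a)*((b-c)*(b-d)))
  + hc / ((c-a)*((c-b)*(c-d))) + hd / ((d-a)*((d-b)*(d-c)))

noncomputable def D3 (a b c ha hb hc : ℝ) : ℝ :=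
    ha / ((a-b)*(a-c)) + hb / ((b-a)*(b-c)) + hc / ((c-a)*(c-b))

lemma erase0' : (Finset.univ.erase (0 : Fin 4)) = {1, 2, 3} := by decide
lemma erase1' : (Finset.univ.erase (1 : Fin 4)) = {0, 2, 3} := by decide
lemma erase2' : (Finset.univ.erase (2 : Fin 4)) = {0, 1, 3} := by decide
lemma erase3' : (Finset.univ.erase (3 : Fin 4)) = {0, 1, 2} := by decide

lemma divDiff_eq_DD4 (h : ℝ → ℝ) (x : Fin 4 → ℝ) :
    divDiff h x = DD4 (x 0) (x 1) (x 2) (x 3) (h (x 0)) (h (x 1)) (h (x 2)) (h (x 3)) := by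
  simp [divDiff, DD4, Fin.sum_univ_four, erase0', erase1', erase2', erase3',
    Finset.prod_insert, Finset.mem_insert, Finset.prod_singleton, add_assoc]

lemma DD4_neg (a b c d p q r s : ℝ) :
    DD4 a b c d (-p) (-q) (-r) (-s) = -DD4 a b c d p q r s := by unfold DD4; ring

lemma DD4_add (a b c d p0 p1 p2 p3 q0 q1 q2 q3 : ℝ) :
    DD4 a b c d (p0+q0) (p1+q1) (p2+q2) (p3+q3)
      = DD4 a b c d p0 p1 p2 p3 + DD4 a b c d q0 q1 q2 q3 := by unfold DD4; ring

lemma DD4_sum {ι : Type*} (s : Finset ι) (a b c d : ℝ) (u v w z : ι → ℝ) :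
    DD4 a b c d (∑ j ∈ s, u j) (∑ j ∈ s, v j) (∑ j ∈ s, w j) (∑ j ∈ s, z j)
      = ∑ j ∈ s, DD4 a b c d (u j) (v j) (w j) (z j) := by
  simp [DD4, Finset.sum_div, Finset.sum_add_distrib]

lemma D3_slope {x y z : ℝ} (hxy : x ≠ y) (hyz : y ≠ z) (hxz : x ≠ z) (hx hy hz : ℝ) :
    D3 x y z hx hy hz * (z - x) = (hz - hy) / (z - y) - (hy - hx) / (y - x) := by
  have h1 : x - y ≠ 0 := sub_ne_zero.mpr hxy
  have h2 : y - z ≠ 0 := sub_ne_zero.mpr hyz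
  have h3 : x - z ≠ 0 := sub_ne_zero.mpr hxz
  have h1' : y - x ≠ 0 := sub_ne_zero.mpr hxy.symm
  have h2' : z - y ≠ 0 := sub_ne_zero.mpr hyz.symm
  have h3' : z - x ≠ 0 := sub_ne_zero.mpr hxz.symm
  unfold D3
  field_simp
  ring

lemma DD4_D3 {a b c d : ℝ} (hab : a ≠ b) (hac : a ≠ c) (had : a ≠ d)
    (hbc : b ≠ c) (hbd : b ≠ d) (hcd : c ≠ d) (ha hb hc hd : ℝ) :
    DD4 a b c d ha hb hc hd * (d - a) = D3 b c d hb hc hd - D3 a b c ha hb hc := by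
  have h1 : a - b ≠ 0 := sub_ne_zero.mpr hab
  have h2 : a - c ≠ 0 := sub_ne_zero.mpr hac
  have h3 : a - d ≠ 0 := sub_ne_zero.mpr had
  have h4 : b - c ≠ 0 := sub_ne_zero.mpr hbc
  have h5 : b - d ≠ 0 := sub_ne_zero.mpr hbd
  have h6 : c - d ≠ 0 := sub_ne_zero.mpr hcd
  have h1' : b - a ≠ 0 := sub_ne_zero.mpr hab.symm
  have h2' : c - a ≠ 0 := sub_ne_zero.mpr hac.symm
  have h3' : d - a ≠ 0 := sub_ne_zero.mpr had.symm
  have h4' : c - b ≠ 0 := sub_ne_zero.mpr hbc.symm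
  have h5' : d - b ≠ 0 := sub_ne_zero.mpr hbd.symm
  have h6' : d - c ≠ 0 := sub_ne_zero.mpr hcd.symm
  have Ta : ha / ((a-b)*((a-c)*(a-d))) * (d-a) = -(ha/((a-b)*(a-c))) := by
    field_simp; ring
  have Tb : hb / ((b-a)*((b-c)*(b-d))) * (d-a) = hb/((b-c)*(b-d)) - hb/((b-a)*(b-c)) := by
    field_simp; ring
  have Tc : hc / ((c-a)*((c-b)*(c-d))) * (d-a) = hc/((c-b)*(c-d)) - hc/((c-a)*(c-b)) := by
    field_simp; ring
  have Td : hd / ((d-a)*((d-b)*(d-c))) * (d-a) = hd/((d-b)*(d-c)) := by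
    field_simp
  unfold DD4 D3
  rw [add_mul, add_mul, add_mul, Ta, Tb, Tc, Td]
  ring

lemma D3_affine {x y z : ℝ} (hxy : x < y) (hyz : y < z) (p q : ℝ) :
    D3 x y z (p*x+q) (p*y+q) (p*z+q) = 0 := by
  have h := D3_slope hxy.ne hyz.ne (hxy.trans hyz).ne (p*x+q) (p*y+q) (p*z+q)
  have e1 : (p*z+q - (p*y+q))/(z-y) = p := by
    rw [show p*z+q - (p*y+q) = p*(z-y) by ring]
    exact mul_div_cancel_right₀ _ (sub_ne_zero.mpr hyz.ne')
  have e2 : (p*y+q - (p*x+q))/(y-x) = p := by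
    rw [show p*y+q - (p*x+q) = p*(y-x) by ring]
    exact mul_div_cancel_right₀ _ (sub_ne_zero.mpr hxy.ne')
  rw [e1, e2, sub_self] at h
  have hzx : z - x ≠ 0 := sub_ne_zero.mpr (hxy.trans hyz).ne'
  exact (mul_eq_zero.mp h).resolve_right hzx

lemma DD4_affine {a b c d : ℝ} (hab : a < b) (hbc : b < c) (hcd : c < d) (p q : ℝ) :
    DD4 a b c d (p*a+q) (p*b+q) (p*c+q) (p*d+q) = 0 := by
  have h := DD4_D3 hab.ne (hab.trans hbc).ne (hab.trans (hbc.trans hcd)).ne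
    hbc.ne (hbc.trans hcd).ne hcd.ne (p*a+q) (p*b+q) (p*c+q) (p*d+q)
  rw [D3_affine hbc hcd, D3_affine hab hbc, sub_self] at h
  have hda : d - a ≠ 0 := sub_ne_zero.mpr (hab.trans (hbc.trans hcd)).ne'
  exact (mul_eq_zero.mp h).resolve_right hda

lemma strictMono4 {a b c d : ℝ} (h1 : a < b) (h2 : b < c) (h3 : c < d) :
    StrictMono ![a, b, c, d] := by
  intro i j hij
  fin_cases i <;> fin_cases j <;> simp_all <;> linarith

set_option maxHeartbeats 1000000 in
lemma DD4_log_pos {k a b c d : ℝ} (hk : 0 ≤ k) (ha0 : 0 < a)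
    (hab : a < b) (hbc : b < c) (hcd : c < d) :
    0 ≤ DD4 a b c d (log (a+k)) (log (b+k)) (log (c+k)) (log (d+k)) := by
  have hb0 : 0 < b := ha0.trans hab
  have hc0' : 0 < c := hb0.trans hbc
  have hd0 : 0 < d := hc0'.trans hcd
  set A : ℝ := log (a+k) / ((a-b)*((a-c)*(a-d))) with hA
  set B : ℝ := log (b+k) / ((b-a)*((b-c)*(b-d))) with hB
  set C : ℝ := log (c+k) / ((c-a)*((c-b)*(c-d))) with hC
  set D : ℝ := log (d+k) / ((d-a)*((d-b)*(d-c))) with hD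
  set K : ℝ := A + B + C + D with hK
  have hDD : DD4 a b c d (log (a+k)) (log (b+k)) (log (c+k)) (log (d+k)) = K := rfl
  rw [hDD]
  set c2 : ℝ := -(A*(b+c+d) + B*(a+c+d) + C*(a+b+d) + D*(a+b+c)) with hc2d
  set c1 : ℝ := A*(b*c+b*d+c*d) + B*(a*c+a*d+c*d) + C*(a*b+a*d+b*d) + D*(a*b+a*c+b*c) with hc1d
  set c0 : ℝ := -(A*(b*c*d) + B*(a*c*d) + C*(a*b*d) + D*(a*b*c)) with hc0d
  set q : ℝ → ℝ := fun x => K*x^3 + c2*x^2 + c1*x + c0 with hq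
  have hqL : ∀ x : ℝ, q x = A*((x-b)*((x-c)*(x-d))) + B*((x-a)*((x-c)*(x-d)))
      + C*((x-a)*((x-b)*(x-d))) + D*((x-a)*((x-b)*(x-c))) := by
    intro x; simp only [hq, hK, hc2d, hc1d, hc0d]; ring
  have hqa : q a = log (a+k) := by
    rw [hqL a]
    have : (a-b)*((a-c)*(a-d)) ≠ 0 := by
      have := sub_ne_zero.mpr hab.ne
      have := sub_ne_zero.mpr (hab.trans hbc).ne
      have := sub_ne_zero.mpr (hab.trans (hbc.trans hcd)).ne
      positivity
    simp [hA, div_mul_cancel₀ _ this, sub_self]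
  have hqb : q b = log (b+k) := by
    rw [hqL b]
    have : (b-a)*((b-c)*(b-d)) ≠ 0 := by
      have := sub_ne_zero.mpr hab.ne'
      have := sub_ne_zero.mpr hbc.ne
      have := sub_ne_zero.mpr (hbc.trans hcd).ne
      positivity
    simp [hB, div_mul_cancel₀ _ this, sub_self]
  have hqc : q c = log (c+k) := by
    rw [hqL c]
    have : (c-a)*((c-b)*(c-d)) ≠ 0 := by
      have := sub_ne_zero.mpr (hab.trans hbc).ne'
      have := sub_ne_zero.mpr hbc.ne'
      have := sub_ne_zero.mpr hcd.ne
      positivity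
    simp [hC, div_mul_cancel₀ _ this, sub_self]
  have hqd : q d = log (d+k) := by
    rw [hqL d]
    have : (d-a)*((d-b)*(d-c)) ≠ 0 := by
      have := sub_ne_zero.mpr (hab.trans (hbc.trans hcd)).ne'
      have := sub_ne_zero.mpr (hbc.trans hcd).ne'
      have := sub_ne_zero.mpr hcd.ne'
      positivity
    simp [hD, div_mul_cancel₀ _ this, sub_self]
  set e : ℝ → ℝ := fun x => log (x+k) - q x with he
  set e1 : ℝ → ℝ := fun x => (x+k)⁻¹ - (3*K*x^2 + 2*c2*x + c1) with he1
  set e2 : ℝ → ℝ := fun x => -((x+k)^2)⁻¹ - (6*K*x + 2*c2) with he2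
  set e3 : ℝ → ℝ := fun x => 2*((x+k)^3)⁻¹ - 6*K with he3
  have hxk : ∀ x : ℝ, 0 < x → x + k ≠ 0 := fun x hx => by positivity
  have hde : ∀ x : ℝ, 0 < x → HasDerivAt e (e1 x) x := by
    intro x hx
    have h1 : HasDerivAt (fun t : ℝ => log (t+k)) (1/(x+k)) x := by
      simpa using (((hasDerivAt_id x).add_const k).log (hxk x hx))
    have h2 : HasDerivAt q (K*(3*x^2) + c2*(2*x) + c1*1 + 0) x := by
      exact ((((hasDerivAt_pow 3 x).const_mul K).add
        ((hasDerivAt_pow 2 x).const_mul c2)).add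
        ((hasDerivAt_id x).const_mul c1)).add (hasDerivAt_const x c0) |>.congr_deriv (by push_cast; ring)
    have := h1.sub h2
    refine this.congr_deriv ?_
    rw [one_div]; ring
  have hde1 : ∀ x : ℝ, 0 < x → HasDerivAt e1 (e2 x) x := by
    intro x hx
    have h1 : HasDerivAt (fun t : ℝ => (t+k)⁻¹) (-1/(x+k)^2) x := by
      exact ((hasDerivAt_id' x).add_const k).inv (hxk x hx)
    have h2 : HasDerivAt (fun t : ℝ => 3*K*t^2 + 2*c2*t + c1) (3*K*(2*x) + 2*c2*1 + 0) x := by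
      exact (((hasDerivAt_pow 2 x).const_mul (3*K)).add
        ((hasDerivAt_id x).const_mul (2*c2))).add (hasDerivAt_const x c1) |>.congr_deriv
        (by push_cast; ring)
    have := h1.sub h2
    refine this.congr_deriv ?_
    rw [neg_div, one_div]
    ring
  have hde2 : ∀ x : ℝ, 0 < x → HasDerivAt e2 (e3 x) x := by
    intro x hx
    have hne : x + k ≠ 0 := hxk x hx
    have h1 : HasDerivAt (fun t : ℝ => -((t+k)^2)⁻¹) (2*((x+k)^3)⁻¹) x := by
      have hp : HasDerivAt (fun t : ℝ => (t+k)^2) ((2:ℕ)*(x+k)^1*1) x :=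
        ((hasDerivAt_id x).add_const k).pow 2
      have := (hp.inv (pow_ne_zero 2 hne)).neg
      refine this.congr_deriv ?_
      field_simp
      ring
    have h2 : HasDerivAt (fun t : ℝ => 6*K*t + 2*c2) (6*K*1 + 0) x :=
      (((hasDerivAt_id x).const_mul (6*K)).add (hasDerivAt_const x (2*c2))).congr_deriv
        (by ring)
    have := h1.sub h2
    refine this.congr_deriv ?_
    ring
  have cont : ∀ (u v : ℝ), 0 < u → ContinuousOn e (Set.Icc u v) := by
    intro u v hu t ht
    exact ((hde t (lt_of_lt_of_le hu ht.1)).continuousAt).continuousWithinAt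
  have cont1 : ∀ (u v : ℝ), 0 < u → ContinuousOn e1 (Set.Icc u v) := by
    intro u v hu t ht
    exact ((hde1 t (lt_of_lt_of_le hu ht.1)).continuousAt).continuousWithinAt
  have roll : ∀ (u v : ℝ), 0 < u → u < v → e u = e v →
      ∃ z ∈ Set.Ioo u v, e1 z = 0 := fun u v hu huv heq =>
    exists_hasDerivAt_eq_zero huv (cont u v hu) heq
      (fun t ht => hde t (hu.trans ht.1))
  have roll1 : ∀ (u v : ℝ), 0 < u → u < v → e1 u = e1 v →
      ∃ z ∈ Set.Ioo u v, e2 z = 0 := fun u v hu huv heq =>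
    exists_hasDerivAt_eq_zero huv (cont1 u v hu) heq
      (fun t ht => hde1 t (hu.trans ht.1))
  have roll2 : ∀ (u v : ℝ), 0 < u → u < v → e2 u = e2 v →
      ∃ z ∈ Set.Ioo u v, e3 z = 0 := fun u v hu huv heq =>
    exists_hasDerivAt_eq_zero huv
      (fun t ht => ((hde2 t (lt_of_lt_of_le hu ht.1)).continuousAt).continuousWithinAt) heq
      (fun t ht => hde2 t (hu.trans ht.1))
  have hea : e a = 0 := by simp [he, hqa]
  have heb : e b = 0 := by simp [he, hqb]
  have hec : e c = 0 := by simp [he, hqc]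
  have hed : e d = 0 := by simp [he, hqd]
  obtain ⟨z1, hz1, hez1⟩ := roll a b ha0 hab (by rw [hea, heb])
  obtain ⟨z2, hz2, hez2⟩ := roll b c hb0 hbc (by rw [heb, hec])
  obtain ⟨z3, hz3, hez3⟩ := roll c d hc0' hcd (by rw [hec, hed])
  have hz10 : 0 < z1 := ha0.trans hz1.1
  have hz20 : 0 < z2 := hb0.trans hz2.1
  have hz12 : z1 < z2 := hz1.2.trans hz2.1
  have hz23 : z2 < z3 := hz2.2.trans hz3.1
  obtain ⟨w1, hw1, hew1⟩ := roll1 z1 z2 hz10 hz12 (by rw [hez1, hez2])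
  obtain ⟨w2, hw2, hew2⟩ := roll1 z2 z3 hz20 hz23 (by rw [hez2, hez3])
  have hw10 : 0 < w1 := hz10.trans hw1.1
  have hw12 : w1 < w2 := hw1.2.trans hw2.1
  obtain ⟨ζ, hζ, heζ⟩ := roll2 w1 w2 hw10 hw12 (by rw [hew1, hew2])
  have hζ0 : 0 < ζ := hw10.trans hζ.1
  have hζk : 0 < ζ + k := by linarith
  have h6K : 6*K = 2*((ζ+k)^3)⁻¹ := by
    have := heζ
    simp only [he3] at this
    linarith
  have hpos : 0 < ((ζ+k)^3)⁻¹ := inv_pos.mpr (pow_pos hζk 3)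
  nlinarith

lemma neg_log_GammaSeq {t : ℝ} (ht : 0 < t) {n : ℕ} (hn : 1 ≤ n) :
    -Real.log (Real.GammaSeq t n)
      = ((-Real.log n) * t + (-Real.log (Nat.factorial n)))
        + ∑ j ∈ Finset.range (n+1), Real.log (t + j) := by
  have hn0 : (0:ℝ) < n := by exact_mod_cast hn
  have hfac : (0:ℝ) < Nat.factorial n := by exact_mod_cast (Nat.factorial_pos n)
  have hrp : (0:ℝ) < (n:ℝ) ^ t := Real.rpow_pos_of_pos hn0 t
  have hprodne : ∏ j ∈ Finset.range (n+1), (t + (j:ℝ)) ≠ 0 :=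
    Finset.prod_ne_zero_iff.mpr (fun j _ => by positivity)
  rw [Real.GammaSeq, Real.log_div (by positivity) hprodne,
    Real.log_mul hrp.ne' hfac.ne', Real.log_rpow hn0,
    Real.log_prod (fun j _ => by positivity)]
  ring

/-- A Bohr–Mollerup type theorem: the gamma function is the unique positive solution of
`f(x+1) = x f(x)`, `f(1) = 1` which is log-concave of the second order on `(0,∞)`. -/
theorem gamma_unique_of_second_order_logConcave :
    ((∀ x > (0 : ℝ), Real.Gamma (x + 1) = x * Real.Gamma x) ∧
      Real.Gamma 1 = 1 ∧
      NConcaveOn 2 (Set.Ioi (0 : ℝ)) (fun x => Real.log (Real.Gamma x))) ∧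
    ∀ f : ℝ → ℝ, (∀ x > 0, 0 < f x) →
      (∀ x > 0, f (x + 1) = x * f x) →
      f 1 = 1 →
      NConcaveOn 2 (Set.Ioi (0 : ℝ)) (fun x => Real.log (f x)) →
      ∀ x > 0, f x = Real.Gamma x := by
  constructor
  · refine ⟨fun x hx => Real.Gamma_add_one hx.ne', Real.Gamma_one, ?_⟩
    intro X hm hmem
    have h0 : (0:ℝ) < X 0 := hmem 0
    have h1 : (0:ℝ) < X 1 := hmem 1
    have h2 : (0:ℝ) < X 2 := hmem 2
    have h3 : (0:ℝ) < X 3 := hmem 3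
    have h01 : X 0 < X 1 := hm (by decide)
    have h12 : X 1 < X 2 := hm (by decide)
    have h23 : X 2 < X 3 := hm (by decide)
    rw [divDiff_eq_DD4]
    have Tl : ∀ i : Fin 4, Tendsto (fun n => -Real.log (Real.GammaSeq (X i) n)) atTop
        (nhds (-Real.log (Real.Gamma (X i)))) := fun i =>
      ((Real.GammaSeq_tendsto_Gamma (X i)).log
        (Real.Gamma_pos_of_pos (hmem i)).ne').neg
    have hlim : Tendsto (fun n => DD4 (X 0) (X 1) (X 2) (X 3)
        (-Real.log (Real.GammaSeq (X 0) n)) (-Real.log (Real.GammaSeq (X 1) n))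
        (-Real.log (Real.GammaSeq (X 2) n)) (-Real.log (Real.GammaSeq (X 3) n))) atTop
        (nhds (DD4 (X 0) (X 1) (X 2) (X 3)
          (-Real.log (Real.Gamma (X 0))) (-Real.log (Real.Gamma (X 1)))
          (-Real.log (Real.Gamma (X 2))) (-Real.log (Real.Gamma (X 3))))) := by
      unfold DD4
      exact ((((Tl 0).div_const _).add ((Tl 1).div_const _)).add
        ((Tl 2).div_const _)).add ((Tl 3).div_const _)
    refine ge_of_tendsto hlim ?_
    filter_upwards [eventually_ge_atTop 1] with n hn
    rw [neg_log_GammaSeq h0 hn, neg_log_GammaSeq h1 hn, neg_log_GammaSeq h2 hn,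
      neg_log_GammaSeq h3 hn, DD4_add, DD4_affine h01 h12 h23, zero_add, DD4_sum]
    exact Finset.sum_nonneg fun j _ =>
      DD4_log_pos (Nat.cast_nonneg j) h0 h01 h12 h23
  · intro f hpos hfeq hone hconc
    set g : ℝ → ℝ := fun t => Real.log (f t) with hg
    have hDDle : ∀ a b c d : ℝ, 0 < a → a < b → b < c → c < d →
        D3 b c d (g b) (g c) (g d) ≤ D3 a b c (g a) (g b) (g c) := by
      intro a b c d ha0 hab hbc hcd
      have hmem : ∀ i, (![a,b,c,d] : Fin 4 → ℝ) i ∈ Set.Ioi (0:ℝ) := by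
        intro i; fin_cases i <;> simp [Set.mem_Ioi] <;> linarith
      have hX := hconc ![a,b,c,d] (strictMono4 hab hbc hcd) hmem
      rw [divDiff_eq_DD4] at hX
      simp only [Matrix.cons_val_zero, Matrix.cons_val_one, Matrix.head_cons,
        Matrix.cons_val_two, Matrix.tail_cons, Matrix.cons_val_three] at hX
      rw [DD4_neg] at hX
      have hXle : DD4 a b c d (g a) (g b) (g c) (g d) ≤ 0 := by linarith
      have hid := DD4_D3 hab.ne (hab.trans hbc).ne (hab.trans (hbc.trans hcd)).ne
        hbc.ne (hbc.trans hcd).ne hcd.ne (g a) (g b) (g c) (g d)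
      have hda : (0:ℝ) ≤ d - a := by linarith
      nlinarith [mul_nonpos_of_nonpos_of_nonneg hXle hda]
    have hgrec : ∀ z : ℝ, 0 < z → g (z+1) = Real.log z + g z := by
      intro z hz
      show Real.log (f (z+1)) = Real.log z + Real.log (f z)
      rw [hfeq z hz, Real.log_mul hz.ne' (hpos z hz).ne']
    have base : ∀ z : ℝ, 0 < z → 0 ≤ D3 z (z+1) (z+2) (g z) (g (z+1)) (g (z+2)) := by
      intro z hz
      have e : D3 z (z+1) (z+2) (g z) (g (z+1)) (g (z+2))
          = (g z)/2 - g (z+1) + g (z+2)/2 := by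
        unfold D3
        rw [show z - (z+1) = -1 by ring, show z - (z+2) = -2 by ring,
          show z+1 - z = (1:ℝ) by ring, show z+1 - (z+2) = -1 by ring,
          show z+2 - z = (2:ℝ) by ring, show z+2 - (z+1) = (1:ℝ) by ring]
        norm_num
        ring
      have hg1 := hgrec z hz
      have hg2 : g (z+2) = Real.log (z+1) + g (z+1) := by
        rw [show z+2 = (z+1)+1 by ring]
        exact hgrec (z+1) (by linarith)
      have hlog : Real.log z ≤ Real.log (z+1) := Real.log_le_log hz (by linarith)
      rw [e, hg1, hg2, hg1]
      linarith
    have slope : ∀ u y z : ℝ, 0 < u → u < y → y < z →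
        (g y - g u)/(y - u) ≤ (g z - g y)/(z - y) := by
      intro u y z h0 h1 h2
      have hz0 : 0 < z := by linarith
      have c1 := hDDle u y z (z+1) h0 h1 h2 (by linarith)
      have c2 := hDDle y z (z+1) (z+2) (by linarith) h2 (by linarith) (by linarith)
      have hD3 : 0 ≤ D3 u y z (g u) (g y) (g z) :=
        le_trans (le_trans (base z hz0) c2) c1
      have hid := D3_slope h1.ne h2.ne (h1.trans h2).ne (g u) (g y) (g z)
      nlinarith [sub_pos.mpr (h1.trans h2), mul_nonneg hD3 (le_of_lt (sub_pos.mpr (h1.trans h2)))]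
    have hconv : ConvexOn ℝ (Set.Ioi (0:ℝ)) (Real.log ∘ f) := by
      refine convexOn_of_slope_mono_adjacent (convex_Ioi 0) ?_
      intro x y z hx _ hxy hyz
      exact slope x y z hx hxy hyz
    intro x hx
    exact Real.eq_Gamma_of_log_convex hconv (fun {y} hy => hfeq y hy)
      (fun {y} hy => hpos y hy) hone hx
end
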